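/- For every core join process J, the Petri net N(J) is 1-safe: every reachable marking assigns at most one token to each place. -/

import Mathlib

/-! Core join-calculus syntax. Names are natural numbers. A process is `nil`, a
message `x⟨v⟩`, a parallel composition, or a definition
`def x⟨u⟩ ∥ y⟨v⟩ ▷ R in P`, written `defn x u y v R P`. -/

abbrev Name := ℕ

inductive Proc : Type
  | nil : Proc
  | msg : Name → Name → Proc
  | par : Proc → Proc → Proc
  | defn : Name → Name → Name → Name → Proc → Proc → Proc
  deriving DecidableEq

/-- A join definition `x⟨u⟩ ∥ y⟨v⟩ ▷ R`, as the tuple `(x, u, y, v, R)`. -/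
abbrev JDef := Name × Name × Name × Name × Proc

/-- Defined variables of the join pattern of a definition. -/
def JDef.dv (D : JDef) : Finset Name := {D.1, D.2.2.1}

/-- Stacks over an alphabet `α`. -/
inductive Stack (α : Type) : Type
  | bot : Stack α
  | cons : α → Stack α → Stack α
  deriving DecidableEq

namespace Stack
variable {α : Type}
def push (s : Stack α) (e : α) : Stack α := cons e s
def pop : Stack α → Stack α
  | bot => bot
  | cons _ s => s
def top : Stack α → Option α
  | bot => none
  | cons e _ => some e
end Stack

/-- Places: a message `x⟨v⟩` together with the scope stack of the sender name and
the scope stack of the sent name. -/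
abbrev Place := (Name × Name) × Stack JDef × Stack JDef

set_option synthInstance.maxSize 1024 in
instance : DecidableEq Place :=
  inferInstanceAs (DecidableEq ((Name × Name) × Stack JDef × Stack JDef))

/-- Scope functions, mapping each name to a (renamed) name and its scope. -/
abbrev ScopeFun := Name → Name × Stack JDef

/-- The initial scope function `f_⊥`. -/
def fbot : ScopeFun := fun n => (n, Stack.bot)

/-- Pop a stack until the given name is a defined variable of the top definition
(by convention every name is in `dv(⊥)`, i.e. the empty stack is kept). This
realizes the repeated applications of the scope-reducing operator `g` in the
decomposition of messages. -/
def popUntil (n : Name) : Stack JDef → Stack JDef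
  | .bot => .bot
  | .cons D s => if n ∈ D.dv then .cons D s else popUntil n s

/-- The decomposition function `dec`, mapping a core join process and a scope
function to a finite set of places. -/
def dec : Proc → ScopeFun → Finset Place
  | .nil, _ => ∅
  | .msg x v, f =>
      {(((f x).1, (f v).1), popUntil (f x).1 (f x).2, popUntil (f v).1 (f v).2)}
  | .par P Q, f => dec P f ∪ dec Q f
  | .defn x u y v R P, f => dec P (fun n => ((f n).1, (f n).2.push (x, u, y, v, R)))

/-- A net transition: preset, label (a join definition) and postset. -/
abbrev JTrans := Set Place × JDef × Set Place

/-- A labeled Petri net for the join semantics. -/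
structure JNet where
  places : Set Place
  trans : Set JTrans
  m0 : Set Place

/-- The scope function `f_t` used to decompose the right-hand side of a reaction. -/
def ft (u v a b : Name) (s sa sb : Stack JDef) : ScopeFun :=
  fun n => if n = u then (a, sa) else if n = v then (b, sb) else (n, s)

/-- The transition rule: whenever two places carry messages matching the join
pattern of the definition on top of their (shared) sender-scope stack, the net
contains a corresponding transition, whose postset is the decomposition of the
right-hand side, is disjoint from the initial marking, and is produced by no
other transition. -/
def TransRule (N : JNet) : Prop :=
  ∀ x a y b u v (R : Proc) (s sa sb : Stack JDef),
    (((x, a), s, sa) : Place) ∈ N.places → (((y, b), s, sb) : Place) ∈ N.places →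
    s.top = some (x, u, y, v, R) →
    ∃ t ∈ N.trans,
      t.1 = {(((x, a), s, sa) : Place), ((y, b), s, sb)} ∧
      t.2.1 = (x, u, y, v, R) ∧
      t.2.2 = ↑(dec R (ft u v a b s sa sb)) ∧
      t.2.2 ∩ N.m0 = ∅ ∧
      ∀ p' ∈ t.2.2, ∀ t' ∈ N.trans, p' ∈ t'.2.2 → t' = t

/-- `N` satisfies the defining conditions of the Petri net semantics of `J`. -/
def Sat (J : Proc) (N : JNet) : Prop :=
  N.m0 = ↑(dec J fbot) ∧ N.m0 ⊆ N.places ∧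
  (∀ t ∈ N.trans, t.1 ⊆ N.places ∧ t.2.2 ⊆ N.places) ∧
  TransRule N

/-- `N` is the Petri net semantics `N(J)` of `J`: the smallest Petri net whose
initial marking is `dec(J, f_⊥)` and which satisfies the transition rule. -/
def IsSemantics (J : Proc) (N : JNet) : Prop :=
  Sat J N ∧ ∀ N', Sat J N' → N.places ⊆ N'.places ∧ N.trans ⊆ N'.trans

/-- Enabledness of a transition under a marking. -/
def Enabled (m : Place → ℕ) (t : JTrans) : Prop := ∀ p ∈ t.1, 0 < m p

open Classical in
/-- The firing rule `m [t⟩ m'`. -/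
noncomputable def Fires (m : Place → ℕ) (t : JTrans) (m' : Place → ℕ) : Prop :=
  Enabled m t ∧ ∀ p, m' p =
    if p ∈ t.2.2 \ t.1 then m p + 1
    else if p ∈ t.1 \ t.2.2 then m p - 1
    else m p

open Classical in
/-- The marking corresponding to a set of places (one token on each). -/
noncomputable def ind (S : Set Place) : Place → ℕ := fun p => if p ∈ S then 1 else 0

/-- Reachable markings of a join net. -/
def JReach (N : JNet) (m : Place → ℕ) : Prop :=
  Relation.ReflTransGen (fun m₁ m₂ => ∃ t ∈ N.trans, Fires m₁ t m₂) (ind N.m0) m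

/-! ### Auxiliary development for the 1-safety proof -/

/-- Structural properties enjoyed by every transition of the minimal net:
the preset is a pair, the postset is disjoint from the initial marking, and the
transition is the unique producer of each of its postset places. -/
def GoodT (N : JNet) (t : JTrans) : Prop :=
  (∃ p1 p2 : Place, t.1 = {p1, p2}) ∧
  t.2.2 ∩ N.m0 = ∅ ∧
  ∀ p ∈ t.2.2, ∀ t' ∈ N.trans, p ∈ t'.2.2 → t' = t

lemma good_of_mem {J : Proc} {N : JNet} (h : IsSemantics J N) :
    ∀ t ∈ N.trans, GoodT N t := by
  obtain ⟨hsat, hmin⟩ := h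
  obtain ⟨h0, h0p, htp, htr⟩ := hsat
  set N' : JNet := ⟨N.places, {t | t ∈ N.trans ∧ GoodT N t}, N.m0⟩ with hN'
  have hsat' : Sat J N' := by
    refine ⟨h0, h0p, ?_, ?_⟩
    · intro t ht; exact htp t ht.1
    · intro x a y b u v R s sa sb h1 h2 h3
      obtain ⟨t, htN, hpre, hlab, hpost, hdisj, huniq⟩ := htr x a y b u v R s sa sb h1 h2 h3
      refine ⟨t, ⟨htN, ⟨_, _, hpre⟩, hdisj, huniq⟩, hpre, hlab, hpost, hdisj, ?_⟩
      intro p' hp' t' ht' hp''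
      exact huniq p' hp' t' ht'.1 hp''
  intro t ht
  exact ((hmin N' hsat').2 ht).2

/-- Graded markability: places that can possibly carry a token, with rank. -/
inductive Mk (N : JNet) : ℕ → Place → Prop
  | base (n : ℕ) (p : Place) : p ∈ N.m0 → Mk N n p
  | step (n : ℕ) (t : JTrans) (p : Place) :
      t ∈ N.trans → (∀ q ∈ t.1, Mk N n q) → p ∈ t.2.2 → Mk N (n + 1) p

lemma Mk.mono {N : JNet} {n : ℕ} {p : Place} (h : Mk N n p) :
    ∀ k, n ≤ k → Mk N k p := by
  induction h with
  | base n p hp => intro k _; exact Mk.base k p hp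
  | step n t p ht hq hp ih =>
      intro k hk
      obtain ⟨k', rfl⟩ : ∃ k', k = k' + 1 := ⟨k - 1, by omega⟩
      exact Mk.step k' t p ht (fun q hq' => ih q hq' k' (by omega)) hp

/-- Labelled firing sequences. -/
inductive Run (N : JNet) : (Place → ℕ) → List JTrans → (Place → ℕ) → Prop
  | nil (m : Place → ℕ) : Run N m [] m
  | cons {m : Place → ℕ} {t : JTrans} {m' : Place → ℕ} {l : List JTrans} {m'' : Place → ℕ} :
      t ∈ N.trans → Fires m t m' → Run N m' l m'' → Run N m (t :: l) m''

lemma run_snoc {N : JNet} {t : JTrans} {m'' : Place → ℕ} (ht : t ∈ N.trans) :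
    ∀ {m l m'}, Run N m l m' → Fires m' t m'' → Run N m (l ++ [t]) m'' := by
  intro m l m' h
  induction h with
  | nil m => intro hf; exact Run.cons ht hf (Run.nil _)
  | cons ht' hf' hr ih => intro hf; exact Run.cons ht' hf' (ih hf)

lemma reach_run {N : JNet} {m} (h : JReach N m) : ∃ l, Run N (ind N.m0) l m := by
  induction h with
  | refl => exact ⟨[], Run.nil _⟩
  | tail hstep hlast ih =>
      obtain ⟨l, hl⟩ := ih
      obtain ⟨t, ht, hf⟩ := hlast
      exact ⟨l ++ [t], run_snoc ht hl hf⟩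

lemma run_mem {N : JNet} {m l m'} (h : Run N m l m') : ∀ u ∈ l, u ∈ N.trans := by
  induction h with
  | nil m => intro u hu; cases hu
  | cons ht hf hr ih =>
      intro u hu
      rcases List.mem_cons.mp hu with rfl | hu
      · assumption
      · exact ih u hu

open Classical in
/-- Count the elements of a list satisfying a predicate. -/
noncomputable def cnt (P : JTrans → Prop) : List JTrans → ℕ
  | [] => 0
  | t :: l => (if P t then 1 else 0) + cnt P l

lemma cnt_mono {P Q : JTrans → Prop} :
    ∀ l : List JTrans, (∀ u ∈ l, P u → Q u) → cnt P l ≤ cnt Q l := by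
  intro l
  induction l with
  | nil => intro _; simp [cnt]
  | cons t l ih =>
      intro h
      have ht := h t (List.mem_cons_self)
      have hl := ih (fun u hu => h u (List.mem_cons_of_mem t hu))
      simp only [cnt]
      by_cases hP : P t
      · simp [hP, ht hP]; omega
      · simp [hP]; omega

lemma cnt_eq_zero {P : JTrans → Prop} :
    ∀ l : List JTrans, (∀ u ∈ l, ¬ P u) → cnt P l = 0 := by
  intro l
  induction l with
  | nil => intro _; simp [cnt]
  | cons t l ih =>
      intro h
      simp only [cnt]
      rw [if_neg (h t (List.mem_cons_self)), ih (fun u hu => h u (List.mem_cons_of_mem t hu))]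

lemma cnt_pos_exists {P : JTrans → Prop} :
    ∀ l : List JTrans, 0 < cnt P l → ∃ u ∈ l, P u := by
  intro l
  induction l with
  | nil => intro h; simp [cnt] at h
  | cons t l ih =>
      intro h
      by_cases hP : P t
      · exact ⟨t, List.mem_cons_self, hP⟩
      · simp only [cnt, if_neg hP, Nat.zero_add] at h
        obtain ⟨u, hu, hPu⟩ := ih h
        exact ⟨u, List.mem_cons_of_mem t hu, hPu⟩

/-- Token conservation along a run. -/
lemma conservation {N : JNet} {m l m'} (h : Run N m l m') (p : Place) :
    m' p + cnt (fun u => p ∈ u.1 \ u.2.2) l = m p + cnt (fun u => p ∈ u.2.2 \ u.1) l := by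
  induction h with
  | nil m => rfl
  | @cons m t m1 l m2 ht hf hr ih =>
      obtain ⟨hen, hfe⟩ := hf
      have h1 := hfe p
      simp only [cnt]
      by_cases hA : p ∈ t.2.2 \ t.1
      · have hB : p ∉ t.1 \ t.2.2 := fun hB => hB.2 hA.1
        rw [if_pos hA, if_neg hB]
        rw [if_pos hA] at h1
        omega
      · rw [if_neg hA]
        rw [if_neg hA] at h1
        by_cases hB : p ∈ t.1 \ t.2.2
        · rw [if_pos hB]
          rw [if_pos hB] at h1
          have := hen p hB.1
          omega
        · rw [if_neg hB]
          rw [if_neg hB] at h1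
          omega

/-- From an enabled transition, the whole preset is markable at a common rank. -/
lemma preset_mk_of_enabled {J : Proc} {N : JNet} (h : IsSemantics J N) {t : JTrans} {m : Place → ℕ}
    (ht : t ∈ N.trans) (hen : Enabled m t) (hinv : ∀ p, 0 < m p → ∃ n, Mk N n p) :
    ∃ n, ∀ q ∈ t.1, Mk N n q := by
  obtain ⟨p1, p2, hpre⟩ := (good_of_mem h t ht).1
  have hm1 : p1 ∈ t.1 := by rw [hpre]; exact Set.mem_insert _ _
  have hm2 : p2 ∈ t.1 := by rw [hpre]; exact Set.mem_insert_of_mem _ rfl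
  obtain ⟨n1, hn1⟩ := hinv p1 (hen p1 hm1)
  obtain ⟨n2, hn2⟩ := hinv p2 (hen p2 hm2)
  refine ⟨max n1 n2, ?_⟩
  intro q hq
  rw [hpre] at hq
  rcases hq with rfl | hq
  · exact hn1.mono _ (le_max_left _ _)
  · rw [Set.mem_singleton_iff] at hq
    subst hq
    exact hn2.mono _ (le_max_right _ _)

/-- Marked places stay markable after one firing. -/
lemma step_inv {J : Proc} {N : JNet} (h : IsSemantics J N) {t : JTrans} {m m1 : Place → ℕ}
    (ht : t ∈ N.trans) (hf : Fires m t m1) (hinv : ∀ p, 0 < m p → ∃ n, Mk N n p) :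
    ∀ p, 0 < m1 p → ∃ n, Mk N n p := by
  obtain ⟨hen, hfe⟩ := hf
  intro p hp
  have h1 := hfe p
  by_cases hA : p ∈ t.2.2 \ t.1
  · obtain ⟨n, hn⟩ := preset_mk_of_enabled h ht hen hinv
    exact ⟨n + 1, Mk.step n t p ht hn hA.1⟩
  · rw [if_neg hA] at h1
    by_cases hB : p ∈ t.1 \ t.2.2
    · rw [if_pos hB] at h1
      exact hinv p (by omega)
    · rw [if_neg hB] at h1
      exact hinv p (by omega)

/-- Along a run, every fired transition had a markable preset. -/
lemma presets_mk {J : Proc} {N : JNet} (h : IsSemantics J N) {m l m'} (hr : Run N m l m')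
    (hinv : ∀ p, 0 < m p → ∃ n, Mk N n p) :
    ∀ u ∈ l, ∃ n, ∀ q ∈ u.1, Mk N n q := by
  induction hr with
  | nil m => intro u hu; cases hu
  | @cons m t m1 l m2 ht hf hr ih =>
      intro u hu
      rcases List.mem_cons.mp hu with rfl | hu
      · exact preset_mk_of_enabled h ht hf.1 hinv
      · exact ih (step_inv h ht hf hinv) u hu

/-- A place that is both in the preset and the postset of a transition is never
markable (it is not initial and its only producer is the transition itself). -/
lemma no_self_loop {J : Proc} {N : JNet} (h : IsSemantics J N) {t : JTrans} {q : Place}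
    (ht : t ∈ N.trans) (hq1 : q ∈ t.1) (hq2 : q ∈ t.2.2) : ∀ n, ¬ Mk N n q := by
  intro n
  induction n using Nat.strong_induction_on with
  | _ n ih =>
    intro hmk
    cases hmk with
    | base _ _ hp =>
        have hdisj := (good_of_mem h t ht).2.1
        exact absurd hdisj (by intro he; exact Set.eq_empty_iff_forall_notMem.mp he q ⟨hq2, hp⟩)
    | step n' t' _ ht' hpre hq2' =>
        have heq := (good_of_mem h t ht).2.2 q hq2 t' ht' hq2'
        subst heq
        exact ih n' (by omega) (hpre q hq1)

/-- Key lemma: along any run from the initial marking, a transition whose preset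
is markable at rank `n` fires at most once. Strong induction on `n`. -/
lemma fires_le_one {J : Proc} {N : JNet} (h : IsSemantics J N) :
    ∀ n (t : JTrans), t ∈ N.trans → (∀ q ∈ t.1, Mk N n q) →
      ∀ l m', Run N (ind N.m0) l m' → cnt (fun u => u = t) l ≤ 1 := by
  intro n
  induction n using Nat.strong_induction_on with
  | _ n ih =>
    intro t ht hmk l m' hrun
    by_contra hc
    push_neg at hc
    obtain ⟨p1, p2, hpre⟩ := (good_of_mem h t ht).1
    have hq1 : p1 ∈ t.1 := by rw [hpre]; exact Set.mem_insert _ _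
    have hq2 : p1 ∉ t.2.2 := fun hq2 => no_self_loop h ht hq1 hq2 n (hmk p1 hq1)
    have hcons := conservation hrun p1
    have hge : cnt (fun u => u = t) l ≤ cnt (fun u => p1 ∈ u.1 \ u.2.2) l :=
      cnt_mono l (fun u _ hut => by subst hut; exact ⟨hq1, hq2⟩)
    have htrans := run_mem hrun
    by_cases hm0 : p1 ∈ N.m0
    · have hprod0 : cnt (fun u => p1 ∈ u.2.2 \ u.1) l = 0 := by
        apply cnt_eq_zero
        intro u hu hPu
        have hdisj := (good_of_mem h u (htrans u hu)).2.1
        exact Set.eq_empty_iff_forall_notMem.mp hdisj p1 ⟨hPu.1, hm0⟩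
      have hi : ind N.m0 p1 = 1 := by simp [ind, hm0]
      omega
    · have hi : ind N.m0 p1 = 0 := by simp [ind, hm0]
      have hmkq := hmk p1 hq1
      cases hmkq with
      | base _ _ hp => exact hm0 hp
      | step n' t' _ ht' hpre' hq2' =>
          have hle := ih n' (by omega) t' ht' hpre' l m' hrun
          have hbd : cnt (fun u => p1 ∈ u.2.2 \ u.1) l ≤ cnt (fun u => u = t') l :=
            cnt_mono l (fun u hu hA =>
              (good_of_mem h t' ht').2.2 p1 hq2' u (htrans u hu) hA.1)
          omega

/-- The Petri net semantics of every core join process is 1-safe: every reachable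
marking assigns at most one token to each place. -/
theorem semantics_one_safe (J : Proc) (N : JNet) (h : IsSemantics J N) :
    ∀ m, JReach N m → ∀ p, m p ≤ 1 := by
  intro m hreach p
  obtain ⟨l, hrun⟩ := reach_run hreach
  have hcons := conservation hrun p
  have htrans := run_mem hrun
  have hbase : ∀ p', 0 < ind N.m0 p' → ∃ n, Mk N n p' := by
    intro p' hp'
    by_cases hm : p' ∈ N.m0
    · exact ⟨0, Mk.base 0 p' hm⟩
    · simp [ind, hm] at hp'
  by_cases hm0 : p ∈ N.m0
  · have hprod0 : cnt (fun u => p ∈ u.2.2 \ u.1) l = 0 := by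
      apply cnt_eq_zero
      intro u hu hPu
      have hdisj := (good_of_mem h u (htrans u hu)).2.1
      exact Set.eq_empty_iff_forall_notMem.mp hdisj p ⟨hPu.1, hm0⟩
    have hi : ind N.m0 p = 1 := by simp [ind, hm0]
    omega
  · have hi : ind N.m0 p = 0 := by simp [ind, hm0]
    rcases Nat.eq_zero_or_pos (cnt (fun u => p ∈ u.2.2 \ u.1) l) with h0 | hpos
    · omega
    · obtain ⟨u, hul, hpu⟩ := cnt_pos_exists l hpos
      have hu := htrans u hul
      obtain ⟨n, hn⟩ := presets_mk h hrun hbase u hul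
      have hle := fires_le_one h n u hu hn l m hrun
      have hbd : cnt (fun u' => p ∈ u'.2.2 \ u'.1) l ≤ cnt (fun u' => u' = u) l :=
        cnt_mono l (fun v hv hA =>
          (good_of_mem h u hu).2.2 p hpu.1 v (htrans v hv) hA.1)
      omega
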